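/- If a topological group G contains a dense subgroup H with w(H) ≤ |H|, then w(G) ≤ |G|. -/

import Mathlib

open TopologicalSpace Cardinal

/-- The weight of a topological space: the minimal cardinality of a basis. -/
noncomputable def weight (X : Type*) [TopologicalSpace X] : Cardinal :=
  ⨅ B : {B : Set (Set X) // IsTopologicalBasis B}, Cardinal.mk B.1

lemma weight_le_basis {X : Type*} [TopologicalSpace X] {B : Set (Set X)}
    (hB : IsTopologicalBasis B) : weight X ≤ Cardinal.mk B :=
  ciInf_le (OrderBot.bddBelow _) (⟨B, hB⟩ : {B : Set (Set X) // IsTopologicalBasis B})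

lemma exists_basis_card_le {X : Type*} [TopologicalSpace X] :
    ∃ B : Set (Set X), IsTopologicalBasis B ∧ Cardinal.mk B ≤ weight X := by
  have hne : Nonempty {B : Set (Set X) // IsTopologicalBasis B} :=
    ⟨⟨_, isTopologicalBasis_opens⟩⟩
  have : weight X ∈ Set.range fun B : {B : Set (Set X) // IsTopologicalBasis B} =>
      Cardinal.mk B.1 := by
    rw [weight, iInf]
    exact csInf_mem (Set.range_nonempty _)
  obtain ⟨⟨B, hB⟩, hBe⟩ := this
  exact ⟨B, hB, hBe.le⟩

theorem weight_le_mk_of_denseSubgroup {G : Type*} [Group G] [TopologicalSpace G]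
    [IsTopologicalGroup G] (H : Subgroup G) (hdense : Dense (H : Set G))
    (hH : weight H ≤ Cardinal.mk H) : weight G ≤ Cardinal.mk G := by
  cases finite_or_infinite G with
  | inl hfin =>
    -- finite case: minimal open neighborhoods form a basis
    set f : G → Set G := fun x => ⋂₀ {U : Set G | IsOpen U ∧ x ∈ U} with hf
    have hopen : ∀ x, IsOpen (f x) := fun x =>
      (Set.toFinite _).isOpen_sInter (fun U hU => hU.1)
    have hbasis : IsTopologicalBasis (Set.range f) := by
      apply isTopologicalBasis_of_isOpen_of_nhds
      · rintro _ ⟨x, rfl⟩; exact hopen x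
      · intro x S hxS hS
        exact ⟨f x, ⟨x, rfl⟩, fun U hU => hU.2, Set.sInter_subset_of_mem ⟨hS, hxS⟩⟩
    exact (weight_le_basis hbasis).trans Cardinal.mk_range_le
  | inr hinf =>
    obtain ⟨B, hB, hBcard⟩ := exists_basis_card_le (X := H)
    -- the family of translates of interiors of closures of basis elements
    set f : G × B → Set G := fun p =>
      (p.1 * ·) '' interior (closure (Subtype.val '' (p.2 : Set H))) with hfdef
    have hbasis : IsTopologicalBasis (Set.range f) := by
      apply isTopologicalBasis_of_isOpen_of_nhds
      · rintro _ ⟨⟨g, U⟩, rfl⟩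
        exact (isOpenMap_mul_left g) _ isOpen_interior
      · intro a S haS hS
        -- translate to a neighborhood of 1
        set T : Set G := (a⁻¹ * ·) '' S with hT
        have hTopen : IsOpen T := (isOpenMap_mul_left a⁻¹) _ hS
        have h1T : (1 : G) ∈ T := ⟨a, haS, inv_mul_cancel a⟩
        obtain ⟨C, ⟨hCnhds, hCclosed⟩, hCT⟩ :=
          (closed_nhds_basis (1 : G)).mem_iff.mp (hTopen.mem_nhds h1T)
        have h1O : (1 : G) ∈ interior C := mem_interior_iff_mem_nhds.mpr hCnhds
        -- pull back to H
        have hO' : (Subtype.val ⁻¹' interior C : Set H) ∈ nhds (1 : H) :=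
          (isOpen_interior.preimage continuous_subtype_val).mem_nhds h1O
        obtain ⟨U, hUB, h1U, hUO⟩ := hB.mem_nhds_iff.mp hO'
        -- U = val ⁻¹' V for some open V in G
        obtain ⟨V, hVopen, hVU⟩ := isOpen_induced_iff.mp (hB.isOpen hUB)
        have h1V : (1 : G) ∈ V := by
          have := h1U; rw [← hVU] at this; exact this
        set W : Set G := interior (closure (Subtype.val '' U)) with hWdef
        have himg : Subtype.val '' U = (H : Set G) ∩ V := by
          rw [← hVU]
          ext x
          constructor
          · rintro ⟨y, hy, rfl⟩; exact ⟨y.2, hy⟩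
          · rintro ⟨hxH, hxV⟩; exact ⟨⟨x, hxH⟩, hxV, rfl⟩
        have hVW : V ⊆ W := by
          rw [hWdef]
          apply interior_maximal _ hVopen
          rw [himg, Set.inter_comm]
          exact hdense.open_subset_closure_inter hVopen
        have hWT : W ⊆ T := by
          have h1 : Subtype.val '' U ⊆ interior C :=
            (Set.image_mono hUO).trans (Set.image_preimage_subset _ _)
          have h2 : closure (Subtype.val '' U) ⊆ C :=
            (closure_mono h1).trans
              (hCclosed.closure_subset_iff.mpr interior_subset)
          exact (interior_subset.trans h2).trans hCT
        refine ⟨(a * ·) '' W, ⟨(a, ⟨U, hUB⟩), rfl⟩, ⟨1, hVW h1V, mul_one a⟩, ?_⟩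
        rintro _ ⟨w, hw, rfl⟩
        obtain ⟨s, hs, rfl⟩ := hWT hw
        simpa [mul_inv_cancel_left] using hs
    have hHG : Cardinal.mk H ≤ Cardinal.mk G :=
      Cardinal.mk_le_of_injective Subtype.val_injective
    calc weight G ≤ Cardinal.mk (Set.range f) := weight_le_basis hbasis
      _ ≤ Cardinal.mk (G × B) := Cardinal.mk_range_le
      _ = Cardinal.mk G * Cardinal.mk B := by simp [Cardinal.mk_prod]
      _ ≤ Cardinal.mk G * Cardinal.mk G :=
          mul_le_mul_right (hBcard.trans (hH.trans hHG)) _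
      _ = Cardinal.mk G := Cardinal.mul_eq_self (Cardinal.aleph0_le_mk G)
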